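/- Let q = 3^r with r ≥ 2, n = 2, k = 3^{2r-1} + 3^r - 3^{r-1}, and let γ ∈ F_{q^2} satisfy (γ - 1)^{(q-1)/2} = γ^{(q-1)/2}. Then f(x) = x + γ·(x^k + x^{kq}) is a permutation of F_{q^2}. -/

import Mathlib

theorem trace_pp (r : ℕ) (hr : 2 ≤ r)
    (E : Type*) [Field E] [Fintype E] (hE : Fintype.card E = (3 ^ r) ^ 2)
    (γ : E) (h : (γ - 1) ^ ((3 ^ r - 1) / 2) = γ ^ ((3 ^ r - 1) / 2)) :
    let k := 3 ^ (2 * r - 1) + 3 ^ r - 3 ^ (r - 1)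
    Function.Bijective (fun x : E => x + γ * (x ^ k + (x ^ k) ^ (3 ^ r))) := by
  intro k
  haveI : Fact (Nat.Prime 3) := ⟨by norm_num⟩
  have hk : k = 3 ^ (2 * r - 1) + 3 ^ r - 3 ^ (r - 1) := rfl
  -- characteristic 3
  haveI hch : CharP E 3 := by
    obtain ⟨n, hp, hcn⟩ := FiniteField.card E (ringChar E)
    have hdvd : ringChar E ∣ (3 ^ r) ^ 2 := by
      rw [← hE, hcn]
      exact dvd_pow_self _ (by positivity)
    have h33 : ringChar E ∣ 3 := hp.dvd_of_dvd_pow (hp.dvd_of_dvd_pow hdvd)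
    have : ringChar E = 3 := (Nat.prime_dvd_prime_iff_eq hp (by norm_num)).mp h33
    exact this ▸ ringChar.charP E
  have h3 : (3 : E) = 0 := by exact_mod_cast CharP.cast_eq_zero E 3
  set Q := 3 ^ r with hQdef
  set M := (Q - 1) / 2 with hMdef
  -- nat facts
  have hQ9 : 9 ≤ Q := by
    rw [hQdef]
    calc (9:ℕ) = 3 ^ 2 := by norm_num
    _ ≤ 3 ^ r := Nat.pow_le_pow_right (by norm_num) hr
  have hQodd : Q % 2 = 1 := by rw [hQdef]; simp [Nat.pow_mod]
  have h2M : 2 * M = Q - 1 := by omega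
  have hM1 : 1 ≤ M := by omega
  have hQ1 : 2 * M + 1 = Q := by omega
  -- Frobenius-type helpers
  have fadd : ∀ x y : E, (x + y) ^ Q = x ^ Q + y ^ Q := by
    intro x y; rw [hQdef]; exact add_pow_char_pow x y 3 r
  have fsub : ∀ x y : E, (x - y) ^ Q = x ^ Q - y ^ Q := by
    intro x y; rw [hQdef]; exact sub_pow_char_pow x y r
  have hQQ : ∀ x : E, (x ^ Q) ^ Q = x := by
    intro x; rw [← pow_mul, ← pow_two, ← hE]; exact FiniteField.pow_card x
  have cadd : ∀ x y : E, (x + y) ^ 3 = x ^ 3 + y ^ 3 := fun x y => add_pow_char x y 3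
  have csub : ∀ x y : E, (x - y) ^ 3 = x ^ 3 - y ^ 3 := fun x y => sub_pow_char x y
  have cinj : ∀ a b : E, a ^ 3 = b ^ 3 → a = b := by
    intro a b hab
    have h0 : (a - b) ^ 3 = 0 := by rw [csub, hab, sub_self]
    have h1 : a - b = 0 := pow_eq_zero_iff (by norm_num) |>.mp h0
    exact sub_eq_zero.mp h1
  -- basic facts about γ
  have hγ0 : γ ≠ 0 := by
    intro h0
    rw [h0, zero_sub, zero_pow (by omega : M ≠ 0)] at h
    have h2 : ((-1:E) ^ M) ^ 2 = 1 := by rw [pow_right_comm]; norm_num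
    rw [h] at h2; norm_num at h2
  have hγ1 : γ ≠ 1 := by
    intro h1
    rw [h1, sub_self, zero_pow (by omega : M ≠ 0), one_pow] at h
    exact zero_ne_one h
  -- γ is in F_q
  have hγQ : γ ^ Q = γ := by
    have hsq : (γ - 1) ^ (2 * M) = γ ^ (2 * M) := by
      rw [mul_comm, pow_mul, pow_mul, h]
    have h2 : (γ - 1) ^ (2 * M) * ((γ - 1) * γ) = γ ^ (2 * M) * (γ * (γ - 1)) := by
      rw [hsq]; ring
    have h4 : (γ - 1) ^ Q * γ = γ ^ Q * (γ - 1) := by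
      rw [← hQ1, pow_succ, pow_succ]; linear_combination h2
    rw [fsub, one_pow] at h4
    linear_combination h4
  -- key exponent identity
  have hkk : k * 3 = 3 ^ (2 * r) + Q * 2 := by
    have ea : 3 ^ (2 * r - 1) * 3 = 3 ^ (2 * r) := by
      rw [← pow_succ]; congr 1; omega
    have eb : 3 ^ (r - 1) * 3 = Q := by
      rw [hQdef, ← pow_succ]; congr 1; omega
    omega
  have hQQ2 : ∀ x : E, x ^ 3 ^ (2 * r) = x := by
    intro x
    rw [show 2 * r = r + r by ring, pow_add, pow_mul]
    exact hQQ x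
  have key3k : ∀ x : E, (x ^ k) ^ 3 = x * (x ^ Q) ^ 2 := by
    intro x
    rw [← pow_mul, hkk, pow_add, hQQ2, pow_mul]
  -- the cubed map
  have hfg : ∀ x : E, (x + γ * (x ^ k + (x ^ k) ^ Q)) ^ 3
      = x ^ 3 + γ ^ 3 * (x * (x ^ Q) ^ 2 + x ^ Q * x ^ 2) := by
    intro x
    rw [cadd, mul_pow, cadd, pow_right_comm (x ^ k) Q 3, key3k, mul_pow,
      pow_right_comm (x ^ Q) 2 Q, hQQ]
  -- injectivity suffices
  rw [← Finite.injective_iff_bijective]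
  intro x y hxy
  simp only at hxy
  have hg : x ^ 3 + γ ^ 3 * (x * (x ^ Q) ^ 2 + x ^ Q * x ^ 2)
      = y ^ 3 + γ ^ 3 * (y * (y ^ Q) ^ 2 + y ^ Q * y ^ 2) := by
    rw [← hfg, ← hfg, hxy]
  obtain ⟨d, hd⟩ : ∃ d : E, d = (y * (y ^ Q) ^ 2 + y ^ Q * y ^ 2) - (x * (x ^ Q) ^ 2 + x ^ Q * x ^ 2) := ⟨_, rfl⟩
  have he3 : (x - y) ^ 3 = γ ^ 3 * d := by rw [csub, hd]; linear_combination hg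
  have hdQ : d ^ Q = d := by
    rw [hd, fsub, fadd, fadd, mul_pow, mul_pow, mul_pow, mul_pow,
        pow_right_comm x 2 Q, pow_right_comm (x ^ Q) 2 Q,
        pow_right_comm y 2 Q, pow_right_comm (y ^ Q) 2 Q, hQQ, hQQ]
    ring
  obtain ⟨c, hc⟩ : ∃ c : E, c = (x - y) * γ⁻¹ := ⟨_, rfl⟩
  have hc3 : c ^ 3 = d := by
    rw [hc, mul_pow, he3, inv_pow]
    field_simp
  have hcQ : c ^ Q = c := by
    apply cinj
    rw [pow_right_comm c Q 3, hc3, hdQ]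
  have hx : x = y + γ * c := by
    rw [hc]; field_simp; ring
  have hxQ : x ^ Q = y ^ Q + γ * c := by
    rw [hx, fadd, mul_pow, hγQ, hcQ]
  -- main polynomial identity
  obtain ⟨t, ht⟩ : ∃ t : E, y ^ Q = t := ⟨_, rfl⟩
  rw [hxQ, hx, ht] at hg
  have hmain : γ ^ 3 * c * ((1 - γ) ^ 3 * c ^ 2 + γ * (t - y) ^ 2) = 0 := by
    linear_combination hg + ((-1:E)*γ^4*c^3 + (1:E)*γ^5*c^3 + (-1:E)*γ^6*c^3
      + (-1:E)*t*γ^5*c^2 + (-1:E)*y*γ^2*c^2 + (-1:E)*y*γ^5*c^2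
      + (-2:E)*y*t*γ^4*c + (-1:E)*y^2*γ*c) * h3
  rcases mul_eq_zero.mp hmain with h1 | h2
  · have hc0 : c = 0 := by
      rcases mul_eq_zero.mp h1 with h1' | h1'
      · exact absurd (pow_eq_zero_iff (by norm_num) |>.mp h1') hγ0
      · exact h1'
    rw [hx, hc0, mul_zero, add_zero]
  · by_cases hc0 : c = 0
    · rw [hx, hc0, mul_zero, add_zero]
    exfalso
    obtain ⟨u, hu⟩ : ∃ u : E, u = t - y := ⟨_, rfl⟩
    rw [← hu] at h2
    have hu0 : u ≠ 0 := by
      intro h0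
      rw [h0] at h2
      have h2' : ((1:E) - γ) ^ 3 * c ^ 2 = 0 := by linear_combination h2
      rcases mul_eq_zero.mp h2' with hh | hh
      · have := pow_eq_zero_iff (by norm_num : (3:ℕ) ≠ 0) |>.mp hh
        exact hγ1 (by linear_combination -this)
      · exact hc0 (pow_eq_zero_iff (by norm_num) |>.mp hh)
    have huQ : u ^ Q = -u := by
      rw [hu, ← ht, fsub, hQQ, ht, neg_sub]
    have hpow : ∀ w : E, w ≠ 0 → w ^ Q = w → w ^ (2 * M) = 1 := by
      intro w hw hwQ
      have hww : w ^ (2 * M) * w = 1 * w := by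
        rw [← pow_succ, hQ1, hwQ, one_mul]
      exact mul_right_cancel₀ hw hww
    have hc2M : c ^ (2 * M) = 1 := hpow c hc0 hcQ
    have hγ2M : γ ^ (2 * M) = 1 := hpow γ hγ0 hγQ
    have hu2M : u ^ (2 * M) = -1 := by
      have hww : u ^ (2 * M) * u = (-1) * u := by
        rw [← pow_succ, hQ1, huQ]; ring
      exact mul_right_cancel₀ hu0 hww
    have heq : ((1 - γ) ^ 3 * c ^ 2) ^ M = (-(γ * u ^ 2)) ^ M := by
      rw [show -(γ * u ^ 2) = (1 - γ) ^ 3 * c ^ 2 by linear_combination -h2]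
    have h1γM : (1 - γ) ^ M = (-1) ^ M * γ ^ M := by
      rw [show (1:E) - γ = (-1) * (γ - 1) by ring, mul_pow, h]
    have hPG : ((-1:E) ^ M * γ ^ M) ^ 3 = ((-1:E) ^ M * γ ^ M) * (-1) := by
      calc ((-1:E) ^ M * γ ^ M) ^ 3
          = ((1 - γ) ^ M) ^ 3 * c ^ (2 * M) := by rw [h1γM, hc2M, mul_one]
        _ = ((1 - γ) ^ 3 * c ^ 2) ^ M := by
            rw [mul_pow, pow_right_comm (1 - γ) M 3, pow_mul c 2 M]
        _ = (-(γ * u ^ 2)) ^ M := heq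
        _ = ((-1:E) ^ M * γ ^ M) * u ^ (2 * M) := by
            rw [show -(γ * u ^ 2) = (-1) * γ * u ^ 2 by ring, mul_pow, mul_pow, pow_mul u 2 M]
        _ = ((-1:E) ^ M * γ ^ M) * (-1) := by rw [hu2M]
    have hP2 : ((-1:E) ^ M) ^ 2 = 1 := by rw [pow_right_comm]; norm_num
    have hG2 : (γ ^ M) ^ 2 = 1 := by rw [← pow_mul, mul_comm M 2]; exact hγ2M
    have hPne : ((-1:E) ^ M) ≠ 0 := pow_ne_zero _ (by norm_num)
    have hGne : (γ ^ M) ≠ 0 := pow_ne_zero _ hγ0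
    have h2PG : (2:E) * ((-1:E) ^ M * γ ^ M) = 0 := by
      linear_combination hPG - (γ ^ M) ^ 3 * ((-1:E) ^ M) * hP2 - ((-1:E) ^ M * γ ^ M) * hG2
    have h20 : (2:E) = 0 := by
      have := mul_right_cancel₀ (mul_ne_zero hPne hGne)
        (by rw [h2PG, zero_mul] : (2:E) * ((-1:E) ^ M * γ ^ M) = 0 * ((-1:E) ^ M * γ ^ M))
      exact this
    exact one_ne_zero (by linear_combination h3 - h20 : (1:E) = 0)
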